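/- For every positive integer d and every nonnegative integer n, p_d(n) ≤ a_d(n) ≤ p_d(n + T_d), where p_d(m) denotes the number of partitions of m into at most d parts and T_d = d(d+1)/2. -/

import Mathlib

/-- `a d n`: the number of tuples `(k₁, …, k_d)` of nonnegative integers summing to `n`
with `k_{j} ≤ k_{j-1} + 1` for `j ∈ {2, …, d}`. -/
def a (d n : ℕ) : ℕ :=
  Finset.card ((Finset.univ : Finset (Fin d → Fin (n + 1))).filter fun t =>
    (∑ i, (t i : ℕ)) = n ∧
    ∀ i : Fin d, ∀ h : i.val + 1 < d, (t ⟨i.val + 1, h⟩ : ℕ) ≤ (t i : ℕ) + 1)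

/-- `pAtMost d m`: the number of partitions of `m` into at most `d` parts. -/
def pAtMost (d m : ℕ) : ℕ :=
  Finset.card (Finset.univ.filter fun p : Nat.Partition m => Multiset.card p.parts ≤ d)

lemma pad_ofFn_getD (l : List ℕ) (d : ℕ) (h : l.length ≤ d) :
    List.ofFn (fun i : Fin d => l.getD i 0) = l ++ List.replicate (d - l.length) 0 := by
  apply List.ext_getElem
  · simp [Nat.add_sub_cancel' h]
  · intro i h1 h2
    simp only [List.getElem_ofFn]
    rcases lt_or_ge i l.length with hi | hi
    · rw [List.getD_eq_getElem _ _ hi, List.getElem_append_left hi]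
    · rw [List.getD_eq_default _ _ hi, List.getElem_append_right hi, List.getElem_replicate]

lemma tri_sum (d : ℕ) : ∑ i : Fin d, (d - i.val) = d * (d + 1) / 2 := by
  rw [Fin.sum_univ_eq_sum_range]
  have h1 : ∑ i ∈ Finset.range d, (d - i) = ∑ i ∈ Finset.range d, (i + 1) := by
    rw [← Finset.sum_range_reflect (fun j => j + 1) d]
    apply Finset.sum_congr rfl
    intro i hi
    simp only [Finset.mem_range] at hi
    omega
  rw [h1]
  have h2 : ∑ i ∈ Finset.range (d + 1), i = (∑ i ∈ Finset.range d, (i + 1)) + 0 :=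
    Finset.sum_range_succ' id d
  have h3 := Finset.sum_range_id (d + 1)
  rw [Nat.add_sub_cancel, Nat.mul_comm] at h3
  omega

lemma getD_le_n (n : ℕ) (p : Nat.Partition n) (i : ℕ) :
    (Multiset.sort p.parts (· ≥ ·)).getD i 0 ≤ n := by
  rcases lt_or_ge i (Multiset.sort p.parts (· ≥ ·)).length with hi | hi
  · rw [List.getD_eq_getElem _ _ hi]
    have hmem : (Multiset.sort p.parts (· ≥ ·))[i] ∈ p.parts := by
      rw [← Multiset.mem_sort (· ≥ ·)]
      exact List.getElem_mem hi
    calc (Multiset.sort p.parts (· ≥ ·))[i] ≤ p.parts.sum :=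
          Multiset.single_le_sum (fun x _ => Nat.zero_le x) _ hmem
      _ = n := p.parts_sum
  · rw [List.getD_eq_default _ _ hi]
    exact Nat.zero_le n

lemma antitone_of_succ {d : ℕ} (g : Fin d → ℕ)
    (h : ∀ i : Fin d, ∀ hi : i.val + 1 < d, g ⟨i.val + 1, hi⟩ ≤ g i) :
    ∀ i j : Fin d, i ≤ j → g j ≤ g i := by
  intro i j hij
  obtain ⟨j, hj⟩ := j
  induction j with
  | zero =>
    have h0 : i.val ≤ 0 := hij
    have : i = ⟨0, hj⟩ := Fin.ext (by simp only [Fin.val_mk]; omega)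
    rw [this]
  | succ k ih =>
    rcases Nat.lt_or_ge i.val (k + 1) with hk | hk
    · have hkd : k < d := Nat.lt_of_succ_lt hj
      calc g ⟨k + 1, hj⟩ ≤ g ⟨k, hkd⟩ := h ⟨k, hkd⟩ hj
        _ ≤ g i := ih hkd (by simpa [Fin.le_def] using Nat.lt_succ_iff.mp hk)
    · have : i = ⟨k + 1, hj⟩ := Fin.le_antisymm hij (by simpa [Fin.le_def] using hk)
      rw [this]

/-- **Lemma.** For every positive integer `d` and nonnegative integer `n`,
`p_d(n) ≤ a_d(n) ≤ p_d(n + T_d)` where `T_d = d(d+1)/2`. -/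
theorem pd_le_ad_le_pd (d n : ℕ) (hd : 0 < d) :
    pAtMost d n ≤ a d n ∧ a d n ≤ pAtMost d (n + d * (d + 1) / 2) := by
  constructor
  · -- lower bound: inject partitions into tuples via descending sort padded with zeros
    unfold pAtMost a
    apply Finset.card_le_card_of_injOn
      (fun p => fun i : Fin d =>
        (⟨(Multiset.sort p.parts (· ≥ ·)).getD i 0,
          Nat.lt_succ_of_le (getD_le_n n p i)⟩ : Fin (n + 1)))
    · intro p hp
      simp only [Finset.mem_coe, Finset.mem_filter, Finset.mem_univ, true_and] at hp ⊢
      set l := Multiset.sort p.parts (· ≥ ·) with hl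
      have hlen : l.length ≤ d := by
        rw [hl, Multiset.length_sort]; exact hp
      have hsumL : l.sum = n := by
        have := p.parts_sum
        rw [← Multiset.sort_eq p.parts (· ≥ ·)] at this
        simpa [← hl] using this
      constructor
      · have := List.sum_ofFn (f := fun i : Fin d => l.getD i 0)
        rw [pad_ofFn_getD l d hlen] at this
        simp only [List.sum_append, List.sum_replicate, smul_eq_mul, mul_zero,
          add_zero, hsumL] at this
        simpa using this.symm
      · intro i hi
        rcases lt_or_ge (i.val + 1) l.length with h1 | h1
        · have h0 : i.val < l.length := Nat.lt_of_succ_lt h1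
          have hsorted : List.Pairwise (· ≥ ·) l := Multiset.pairwise_sort _ _
          have := hsorted.rel_get_of_lt (a := ⟨i.val, h0⟩) (b := ⟨i.val + 1, h1⟩)
            (by simp [Fin.lt_def])
          simp only [List.get_eq_getElem] at this
          rw [List.getD_eq_getElem _ _ h1, List.getD_eq_getElem _ _ h0]
          omega
        · rw [List.getD_eq_default _ _ h1]
          exact Nat.zero_le _
    · intro p hp q hq hpq
      simp only [Finset.coe_filter, Set.mem_setOf_eq, Finset.mem_univ, true_and] at hp hq
      set lp := Multiset.sort p.parts (· ≥ ·) with hlp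
      set lq := Multiset.sort q.parts (· ≥ ·) with hlq
      have hlenp : lp.length ≤ d := by rw [hlp, Multiset.length_sort]; exact hp
      have hlenq : lq.length ≤ d := by rw [hlq, Multiset.length_sort]; exact hq
      have hfn : (List.ofFn fun i : Fin d => lp.getD i 0)
          = List.ofFn fun i : Fin d => lq.getD i 0 := by
        rw [List.ofFn_inj]
        funext i
        have := congrFun hpq i
        simpa [Fin.ext_iff] using this
      rw [pad_ofFn_getD lp d hlenp, pad_ofFn_getD lq d hlenq] at hfn
      have hposp : ∀ x ∈ lp, 0 < x := fun x hx =>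
        p.parts_pos ((Multiset.mem_sort (· ≥ ·)).1 hx)
      have hposq : ∀ x ∈ lq, 0 < x := fun x hx =>
        q.parts_pos ((Multiset.mem_sort (· ≥ ·)).1 hx)
      have hfil : ∀ (l : List ℕ) (k : ℕ), (∀ x ∈ l, 0 < x) →
          (l ++ List.replicate k 0).filter (fun x => decide (0 < x)) = l := by
        intro l k hpos
        rw [List.filter_append]
        have h1 : l.filter (fun x => decide (0 < x)) = l :=
          List.filter_eq_self.2 (fun x hx => by simpa using hpos x hx)
        have h2 : (List.replicate k 0).filter (fun x => decide (0 < (x:ℕ))) = [] := by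
          simp
        rw [h1, h2, List.append_nil]
      have hll : lp = lq := by
        rw [← hfil lp (d - lp.length) hposp, ← hfil lq (d - lq.length) hposq, hfn]
      apply Nat.Partition.ext
      rw [← Multiset.sort_eq p.parts (· ≥ ·), ← Multiset.sort_eq q.parts (· ≥ ·),
        ← hlp, ← hlq, hll]
  · -- upper bound: inject tuples into partitions of n + T_d via i ↦ t i + (d - i)
    unfold pAtMost a
    classical
    set T := d * (d + 1) / 2 with hT
    have key : ∀ t : Fin d → Fin (n + 1),
        ((∑ i, (t i : ℕ)) = n) →
        (Multiset.map (fun i : Fin d => (t i : ℕ) + (d - i.val)) Finset.univ.val).sum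
          = n + T := by
      intro t ht
      have : (Multiset.map (fun i : Fin d => (t i : ℕ) + (d - i.val)) Finset.univ.val).sum
          = ∑ i : Fin d, ((t i : ℕ) + (d - i.val)) := rfl
      rw [this, Finset.sum_add_distrib, ht, tri_sum d]
    apply Finset.card_le_card_of_injOn
      (fun t => if h : (∑ i, (t i : ℕ)) = n then
        ⟨Multiset.map (fun i : Fin d => (t i : ℕ) + (d - i.val)) Finset.univ.val,
         by
          intro x hx
          obtain ⟨i, _, rfl⟩ := Multiset.mem_map.1 hx
          have : 0 < d - i.val := Nat.sub_pos_of_lt i.isLt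
          omega,
         key t h⟩
      else Nat.Partition.indiscrete _)
    · intro t ht
      simp only [Finset.mem_coe, Finset.mem_filter, Finset.mem_univ, true_and] at ht ⊢
      rw [dif_pos ht.1]
      simp
    · intro t ht s hs hts
      simp only [Finset.coe_filter, Set.mem_setOf_eq, Finset.mem_univ, true_and] at ht hs
      dsimp only at hts
      rw [dif_pos ht.1, dif_pos hs.1] at hts
      have hparts := congrArg Nat.Partition.parts hts
      simp only at hparts
      -- rewrite multisets as coercions of ofFn lists
      have huniv : (Finset.univ.val : Multiset (Fin d)) = ↑(List.finRange d) := rfl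
      rw [huniv, Multiset.map_coe, Multiset.map_coe, ← List.ofFn_eq_map,
        ← List.ofFn_eq_map, Multiset.coe_eq_coe] at hparts
      have hsort : ∀ u : Fin d → Fin (n + 1),
          (∀ i : Fin d, ∀ h : i.val + 1 < d, (u ⟨i.val + 1, h⟩ : ℕ) ≤ (u i : ℕ) + 1) →
          List.Pairwise (· ≥ ·) (List.ofFn fun i : Fin d => (u i : ℕ) + (d - i.val)) := by
        intro u hu
        rw [List.pairwise_ofFn]
        intro i j hij
        refine antitone_of_succ (fun i => (u i : ℕ) + (d - i.val)) ?_ i j (le_of_lt hij)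
        intro i hi
        have := hu i hi
        have hid : i.val < d := i.isLt
        simp only
        omega
      have heq := List.Perm.eq_of_pairwise' (r := (· ≥ ·)) (hsort t ht.2) (hsort s hs.2) hparts
      rw [List.ofFn_inj] at heq
      funext i
      have := congrFun heq i
      have hiv : (t i : ℕ) = (s i : ℕ) := by omega
      exact Fin.ext hiv
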